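/- (Failure of secrecy of Protocol 1 for superposition inputs when the server's measurement is skipped.) With U as in Protocol 1 and |+_{m}⟩ = (1/√m)∑_{j=0}^{m−1}|j⟩, let ψ_k = U(|k⟩ ⊗ |0⟩ ⊗ |+_{d_1}⟩ ⊗ ⋯ ⊗ |+_{d_f}⟩) for k ∈ [f]. Then the reduced density matrix of |ψ_k⟩⟨ψ_k| on the k-th message system ℂ^{d_k} is the maximally mixed state (1/d_k)·I_{d_k}, while for every ℓ ≠ k the reduced density matrix on ℂ^{d_ℓ} equals the pure state |+_{d_ℓ}⟩⟨+_{d_ℓ}|. In particular, if k ≠ k' and d_k ≥ 2, the reduced state of ψ_k on ℂ^{d_1} ⊗ ⋯ ⊗ ℂ^{d_f} differs from that of ψ_{k'}, so the final-state secrecy condition fails. -/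
import Mathlib


open Matrix

/-- Outer product `|v⟩⟨v|` of a vector. -/
noncomputable def outerProd {ι : Type*} (v : ι → ℂ) : Matrix ι ι ℂ :=
  Matrix.of fun p q => v p * (starRingEnd ℂ) (v q)

/-- Partial trace over the first tensor factor. -/
noncomputable def ptraceFst {α β : Type*} [Fintype α] (M : Matrix (α × β) (α × β) ℂ) :
    Matrix β β ℂ :=
  Matrix.of fun k l => ∑ i : α, M (i, k) (i, l)

/-- The controlled unitary `U = ∑_ℓ |ℓ⟩⟨ℓ| ⊗ U_ℓ` of Protocol 1, acting on
`ℂ^f ⊗ ℂ^d ⊗ ℂ^{d_1} ⊗ ⋯ ⊗ ℂ^{d_f}`, where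
`U_ℓ = ∑_{j',j} |j+j' mod d⟩⟨j'| ⊗ |j⟩⟨j|` acts on `ℂ^d ⊗ ℂ^{d_ℓ}` (extended by the
identity elsewhere). -/
noncomputable def Uprot (f d : ℕ) (dd : Fin f → ℕ) :
    Matrix ((Fin f × Fin d) × (∀ ℓ, Fin (dd ℓ))) ((Fin f × Fin d) × (∀ ℓ, Fin (dd ℓ))) ℂ :=
  Matrix.of fun p q =>
    if p.1.1 = q.1.1 ∧ p.2 = q.2 ∧ (p.1.2 : ℕ) = ((q.2 q.1.1 : ℕ) + (q.1.2 : ℕ)) % d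
    then 1 else 0

/-- `ψ_k = U(|k⟩ ⊗ |0⟩ ⊗ |+_{d_1}⟩ ⊗ ⋯ ⊗ |+_{d_f}⟩)`. -/
noncomputable def psiPlus (f d : ℕ) (hd : 0 < d) (dd : Fin f → ℕ) (k : Fin f) :
    (Fin f × Fin d) × (∀ ℓ, Fin (dd ℓ)) → ℂ :=
  (Uprot f d dd).mulVec fun p =>
    if p.1.1 = k ∧ p.1.2 = ⟨0, hd⟩ then ∏ ℓ, (((Real.sqrt (dd ℓ))⁻¹ : ℝ) : ℂ) else 0

/-- Reduced density matrix on the `ℓ`-th message system `ℂ^{d_ℓ}` (partial trace over all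
other tensor factors). -/
noncomputable def margAt (f d : ℕ) (dd : Fin f → ℕ) (ℓ : Fin f)
    (M : Matrix ((Fin f × Fin d) × (∀ j, Fin (dd j))) ((Fin f × Fin d) × (∀ j, Fin (dd j))) ℂ) :
    Matrix (Fin (dd ℓ)) (Fin (dd ℓ)) ℂ :=
  Matrix.of fun m m' =>
    ∑ a : Fin f × Fin d, ∑ z : ∀ j : {j : Fin f // j ≠ ℓ}, Fin (dd j),
      M (a, (Equiv.piSplitAt ℓ (fun j => Fin (dd j))).symm (m, z))
        (a, (Equiv.piSplitAt ℓ (fun j => Fin (dd j))).symm (m', z))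

/-- Failure of secrecy of Protocol 1 for superposition inputs when the server's
measurement is skipped: the reduced state of `ψ_k` on the `k`-th message system is
maximally mixed, while on every other message system it is the pure state `|+⟩⟨+|`;
hence for `k ≠ k'` with `d_k ≥ 2` the server's reduced final states differ. -/
lemma psi_apply (f d : ℕ) (hd : 0 < d) (dd : Fin f → ℕ) (hdle : ∀ ℓ, dd ℓ ≤ d) (k : Fin f)
    (p : (Fin f × Fin d) × (∀ ℓ, Fin (dd ℓ))) :
    psiPlus f d hd dd k p =
      if p.1.1 = k ∧ (p.1.2 : ℕ) = (p.2 k : ℕ)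
      then ∏ ℓ, (((Real.sqrt (dd ℓ))⁻¹ : ℝ) : ℂ) else 0 := by
  have hmod : ((p.2 k : ℕ)) % d = (p.2 k : ℕ) :=
    Nat.mod_eq_of_lt ((p.2 k).isLt.trans_le (hdle k))
  simp only [psiPlus, Matrix.mulVec, dotProduct]
  rw [Finset.sum_eq_single ((k, (⟨0, hd⟩ : Fin d)), p.2)]
  · simp [Uprot, hmod]
  · rintro ⟨⟨ℓ', j'⟩, z'⟩ - hq
    by_cases h1 : ℓ' = k ∧ j' = (⟨0, hd⟩ : Fin d)
    · obtain ⟨rfl, rfl⟩ := h1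
      have hz : z' ≠ p.2 := fun h => hq (by rw [h])
      simp [Uprot, Ne.symm hz]
    · simp [h1]
  · simp

lemma sum_a (f d : ℕ) (k : Fin f) (t t' : ℕ) (ht : t < d) (x : ℂ) :
    (∑ a : Fin f × Fin d, if a.1 = k ∧ (a.2 : ℕ) = t ∧ (a.2 : ℕ) = t' then x else 0)
      = if t = t' then x else 0 := by
  by_cases h : t = t'
  · subst h
    rw [if_pos rfl, Finset.sum_eq_single ((k, ⟨t, ht⟩) : Fin f × Fin d)]
    · simp
    · rintro ⟨i, b⟩ - hab
      rw [if_neg]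
      rintro ⟨rfl, hb, -⟩
      exact hab (by simp [Prod.ext_iff, Fin.ext_iff]; exact hb)
    · simp
  · rw [if_neg h]
    refine Finset.sum_eq_zero fun a _ => ?_
    rw [if_neg]
    rintro ⟨-, h1, h2⟩
    exact h (h1.symm.trans h2)

lemma csq (f : ℕ) (dd : Fin f → ℕ) :
    (∏ ℓ, (((Real.sqrt (dd ℓ))⁻¹ : ℝ) : ℂ)) *
      (starRingEnd ℂ) (∏ ℓ, (((Real.sqrt (dd ℓ))⁻¹ : ℝ) : ℂ))
      = ∏ ℓ, ((dd ℓ : ℂ))⁻¹ := by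
  rw [map_prod, ← Finset.prod_mul_distrib]
  refine Finset.prod_congr rfl fun ℓ _ => ?_
  rw [Complex.conj_ofReal, ← Complex.ofReal_mul, ← mul_inv,
    Real.mul_self_sqrt (Nat.cast_nonneg _)]
  push_cast
  ring

lemma prod_compl_mul (f : ℕ) (dd : Fin f → ℕ) (hdd : ∀ ℓ, 0 < dd ℓ) (ℓ : Fin f) :
    (∏ j : {j : Fin f // j ≠ ℓ}, ((dd j : ℂ))) * (∏ j, ((dd j : ℂ))⁻¹) = ((dd ℓ : ℂ))⁻¹ := by
  have h1 : (∏ j : {j : Fin f // j ≠ ℓ}, ((dd j : ℂ)))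
      = ∏ j ∈ Finset.univ.erase ℓ, ((dd j : ℂ)) := by
    rw [← Finset.prod_subtype (Finset.univ.erase ℓ) (by simp) fun j => ((dd j : ℂ))]
  have h2 : (∏ j, ((dd j : ℂ))⁻¹)
      = ((dd ℓ : ℂ))⁻¹ * ∏ j ∈ Finset.univ.erase ℓ, ((dd j : ℂ))⁻¹ :=
    (Finset.mul_prod_erase Finset.univ _ (Finset.mem_univ ℓ)).symm
  rw [h1, h2, mul_left_comm, ← Finset.prod_mul_distrib]
  rw [Finset.prod_congr rfl fun j _ => mul_inv_cancel₀ (by exact_mod_cast (hdd j).ne')]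
  simp

lemma ptrace_entry (f d : ℕ) (hd : 0 < d) (dd : Fin f → ℕ) (hdle : ∀ ℓ, dd ℓ ≤ d)
    (k : Fin f) (z z' : ∀ j, Fin (dd j)) :
    ptraceFst (outerProd (psiPlus f d hd dd k)) z z'
      = if (z k : ℕ) = (z' k : ℕ) then ∏ j, ((dd j : ℂ))⁻¹ else 0 := by
  rw [ptraceFst]
  simp only [Matrix.of_apply, outerProd]
  rw [← csq f dd, ← sum_a f d k (z k) (z' k) ((z k).isLt.trans_le (hdle k))]
  refine Finset.sum_congr rfl fun a _ => ?_
  rw [psi_apply f d hd dd hdle k (a, z), psi_apply f d hd dd hdle k (a, z')]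
  simp only [apply_ite (starRingEnd ℂ), map_zero, ite_mul, zero_mul, mul_ite, mul_zero]
  rw [← ite_and]
  exact if_congr (by tauto) rfl rfl

lemma marg_entry (f d : ℕ) (hd : 0 < d) (dd : Fin f → ℕ) (hdle : ∀ ℓ, dd ℓ ≤ d)
    (k ℓ : Fin f) (m m' : Fin (dd ℓ)) :
    margAt f d dd ℓ (outerProd (psiPlus f d hd dd k)) m m'
      = ∑ z : ∀ j : {j : Fin f // j ≠ ℓ}, Fin (dd j),
          if (((Equiv.piSplitAt ℓ (fun j => Fin (dd j))).symm (m, z) k : ℕ)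
             = ((Equiv.piSplitAt ℓ (fun j => Fin (dd j))).symm (m', z) k : ℕ))
          then ∏ j, ((dd j : ℂ))⁻¹ else 0 := by
  rw [margAt]
  simp only [Matrix.of_apply]
  rw [Finset.sum_comm]
  refine Finset.sum_congr rfl fun z _ => ?_
  rw [← csq f dd,
    ← sum_a f d k ((Equiv.piSplitAt ℓ (fun j => Fin (dd j))).symm (m, z) k)
      ((Equiv.piSplitAt ℓ (fun j => Fin (dd j))).symm (m', z) k)
      (((Equiv.piSplitAt ℓ (fun j => Fin (dd j))).symm (m, z) k).isLt.trans_le (hdle k))]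
  refine Finset.sum_congr rfl fun a _ => ?_
  simp only [outerProd, Matrix.of_apply]
  rw [psi_apply f d hd dd hdle k, psi_apply f d hd dd hdle k]
  simp only [apply_ite (starRingEnd ℂ), map_zero, ite_mul, zero_mul, mul_ite, mul_zero]
  rw [← ite_and]
  exact if_congr (by tauto) rfl rfl

lemma card_pi_c (f : ℕ) (dd : Fin f → ℕ) (ℓ : Fin f) :
    ((Fintype.card (∀ j : {j : Fin f // j ≠ ℓ}, Fin (dd j)) : ℕ) : ℂ)
      = ∏ j : {j : Fin f // j ≠ ℓ}, ((dd j : ℂ)) := by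
  rw [Fintype.card_pi]
  push_cast
  simp

theorem protocol1_superposition_insecure (f d : ℕ) (hf : 1 ≤ f) (hd : 0 < d)
    (dd : Fin f → ℕ) (hdd : ∀ ℓ, 0 < dd ℓ) (hdle : ∀ ℓ, dd ℓ ≤ d) :
    (∀ k : Fin f,
      margAt f d dd k (outerProd (psiPlus f d hd dd k))
        = (((dd k : ℂ))⁻¹) • (1 : Matrix (Fin (dd k)) (Fin (dd k)) ℂ)) ∧
    (∀ k ℓ : Fin f, ℓ ≠ k →
      margAt f d dd ℓ (outerProd (psiPlus f d hd dd k))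
        = Matrix.of fun _ _ => ((dd ℓ : ℂ))⁻¹) ∧
    (∀ k k' : Fin f, k ≠ k' → 2 ≤ dd k →
      ptraceFst (outerProd (psiPlus f d hd dd k))
        ≠ ptraceFst (outerProd (psiPlus f d hd dd k'))) := by
  refine ⟨?_, ?_, ?_⟩
  · intro k
    ext m m'
    rw [marg_entry f d hd dd hdle k k m m']
    simp only [Equiv.piSplitAt_symm_apply, eq_self_iff_true, dite_true]
    rw [Finset.sum_const, Finset.card_univ, nsmul_eq_mul, card_pi_c f dd k]
    simp only [Matrix.smul_apply, Matrix.one_apply, smul_eq_mul]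
    by_cases h : m = m'
    · subst h
      rw [if_pos rfl, if_pos rfl, mul_one, prod_compl_mul f dd hdd k]
    · rw [if_neg (fun hmm => h (Fin.ext hmm)), if_neg h, mul_zero, mul_zero]
  · intro k ℓ hlk
    have hk : k ≠ ℓ := fun h => hlk h.symm
    ext m m'
    rw [marg_entry f d hd dd hdle k ℓ m m']
    simp only [Equiv.piSplitAt_symm_apply, dif_neg hk, eq_self_iff_true, if_true]
    rw [Finset.sum_const, Finset.card_univ, nsmul_eq_mul, card_pi_c f dd ℓ,
      prod_compl_mul f dd hdd ℓ]
    simp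
  · intro k k' hkk' h2 heq
    have h1k : (1 : ℕ) < dd k := h2
    set z0 : ∀ j, Fin (dd j) := fun j => ⟨0, hdd j⟩ with hz0
    set z1 : ∀ j, Fin (dd j) := Function.update z0 k ⟨1, h1k⟩ with hz1
    have hE := congrFun (congrFun heq z0) z1
    rw [ptrace_entry f d hd dd hdle k z0 z1, ptrace_entry f d hd dd hdle k' z0 z1] at hE
    have hz1k : (z1 k : ℕ) = 1 := by simp [hz1]
    have hz1k' : (z1 k' : ℕ) = (z0 k' : ℕ) := by
      rw [hz1, Function.update_of_ne (Ne.symm hkk')]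
    rw [if_neg (by simp [hz1k, hz0]), if_pos (by rw [hz1k'])] at hE
    have : (∏ j, ((dd j : ℂ))⁻¹) ≠ 0 :=
      Finset.prod_ne_zero_iff.2 fun j _ =>
        inv_ne_zero (by exact_mod_cast (hdd j).ne')
    exact this hE.symm
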